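/- arXiv:1212.0991 — 2 statements merged into one kernel-verified Lean document; each statement's English description precedes it below -/
import Mathlib

section
/- In the Geiser specialization a₁ = a₂ = 0, the polynomials γ₄, r₁', r₃', r₁, r₂, r₃, φ₆, ψ₆, C₅, K satisfy the splittings: γ₄ = w·γ₁ with γ₁ = −(a₁'y₁ + a₂'y₂); r₁' = w²·(a₂'²B₁ − a₁'a₂'B₂ + a₁'²B₃); r₃' = w·(a₁'C₂ − a₂'C₁); r_i = w³·r̃_i for i = 1,2,3 where r̃₁ = −a₂'·r̃₁', r̃₂ = a₁'·r̃₁', r̃₃ = a₁'a₂'·r̃₃' with r̃₁' = a₂'²B₁ − a₁'a₂'B₂ + a₁'²B₃ and r̃₃' = a₁'C₂ − a₂'C₁; and φ₆ = w·φ₃, ψ₆ = w·ψ₃, C₅ = w·C̃, K = w·K̃ for some polynomials φ₃, ψ₃, C̃, K̃ (i.e., w divides φ₆, ψ₆, C₅, K). -/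
open MvPolynomial

noncomputable section

/-- The polynomial ring ℚ[b₁,b₂,b₃,c₁,c₂,a₁',a₂',b₁',b₂',b₃',c₁',c₂',y₁,y₂,y₃]
(the Geiser specialization a₁ = a₂ = 0). -/
abbrev RG : Type := MvPolynomial (Fin 15) ℚ

def b1 : RG := X 0
def b2 : RG := X 1
def b3 : RG := X 2
def c1 : RG := X 3
def c2 : RG := X 4
def a1' : RG := X 5
def a2' : RG := X 6
def b1' : RG := X 7
def b2' : RG := X 8
def b3' : RG := X 9
def c1' : RG := X 10
def c2' : RG := X 11
def y1 : RG := X 12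
def y2 : RG := X 13
def y3 : RG := X 14

/-- w at y, with a₁ = a₂ = 0. -/
def w : RG := y3*(b1*y1^2 + b2*y1*y2 + b3*y2^2) + c1*y1^2*y2 + c2*y1*y2^2
/-- w' at y. -/
def w' : RG :=
  y3^2*(a1'*y1 + a2'*y2) + y3*(b1'*y1^2 + b2'*y1*y2 + b3'*y2^2) + c1'*y1^2*y2 + c2'*y1*y2^2

def A1 : RG := -(a1' * w)
def A2 : RG := -(a2' * w)
def B1 : RG := b1*w' - b1'*w
def B2 : RG := b2*w' - b2'*w
def B3 : RG := b3*w' - b3'*w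
def C1 : RG := c1*w' - c1'*w
def C2 : RG := c2*w' - c2'*w

def γ1 : RG := -(a1'*y1 + a2'*y2)
def rt1' : RG := a2'^2*B1 - a1'*a2'*B2 + a1'^2*B3
def rt3' : RG := a1'*C2 - a2'*C1
def rt1 : RG := -(a2' * rt1')
def rt2 : RG := a1' * rt1'
def rt3 : RG := a1'*a2'*rt3'

/-- C̃, in terms of the two exact quotients
qq₁ = (B₁ − a₁'b₁y₁y₃²)/y₂ and qq₂ = (a₂'y₃(w − b₁y₁²y₃) − B₃y₂)/(y₁y₂). -/
def Ct (qq1 qq2 : RG) : RG := -(a2' * qq1) + a1' * qq2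
def φ3 (qq1 qq2 : RG) : RG := -(a1' * C2) + y3 * Ct qq1 qq2
def ψ3 (qq1 qq2 : RG) : RG := -(a2' * C1) + y3 * Ct qq1 qq2

def γ4 : RG := y1*A1 + y2*A2
def r1'' : RG := B1*A2^2 - B2*A1*A2 + B3*A1^2
def r3'' : RG := A2*C1 - A1*C2
def r1 : RG := A2*r1''
def r2 : RG := -(A1*r1'')
def r3 : RG := A1*A2*r3''
def κ : RG := -(a1' * b1)
def C5 (q1 q2 q3 : RG) : RG := A2*q1 + q2*q3 + κ*B3*y1*y3
def φ6 (q1 q2 q3 : RG) : RG := A1*C2 + y3 * C5 q1 q2 q3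
def ψ6 (q1 q2 q3 : RG) : RG := A2*C1 + y3 * C5 q1 q2 q3
def K (q1 q2 q3 qK : RG) : RG := ψ6 q1 q2 q3 * qK - φ6 q1 q2 q3 * q3

/-- In the Geiser specialization a₁ = a₂ = 0 the splittings
γ₄ = wγ₁, r₁' = w²r̃₁', r₃' = wr̃₃', rᵢ = w³r̃ᵢ hold, and w divides
φ₆, ψ₆, C₅ and K. -/
theorem stmt10 (q1 q2 q3 qK : RG)
    (h1 : y2 * q1 = B1 + κ*y1*y3^2)
    (h2 : y2 * q2 = A1 - κ*y1^2*y3)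
    (h3 : y1 * q3 = A2*y3 + B3*y2)
    (hqK : y2 * qK = A1*y3 + B1*y1) :
    γ4 = w * γ1 ∧
    r1'' = w^2 * rt1' ∧
    r3'' = w * rt3' ∧
    r1 = w^3 * rt1 ∧ r2 = w^3 * rt2 ∧ r3 = w^3 * rt3 ∧
    w ∣ φ6 q1 q2 q3 ∧ w ∣ ψ6 q1 q2 q3 ∧ w ∣ C5 q1 q2 q3 ∧ w ∣ K q1 q2 q3 qK := by

  have hy12 : (y1 * y2 : RG) ≠ 0 := mul_ne_zero (X_ne_zero _) (X_ne_zero _)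
  set Q : RG := c2*a2'*b1'*y1*y2 + c2*a1'*b3'*y2^2 + c2*a1'*a2'*y2*y3 + c1*a2'*b1'*y1^2 + c1*a1'*b3'*y1*y2 + c1*a1'*a2'*y1*y3 + b3*a2'*b1'*y2*y3 - b3*a1'*c2'*y2^2 - b3*a1'*c1'*y1*y2 - b3*a1'*b2'*y2*y3 - b3*a1'*b1'*y1*y3 - b3*a1'^2*y3^2 + b2*a2'*b1'*y1*y3 + b2*a1'*b3'*y2*y3 + b2*a1'*a2'*y3^2 - b1*a2'*c2'*y1*y2 - b1*a2'*c1'*y1^2 - b1*a2'*b3'*y2*y3 - b1*a2'*b2'*y1*y3 - b1*a2'^2*y3^2 + b1*a1'*b3'*y1*y3 with hQ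
  have hC5 : C5 q1 q2 q3 = w * Q := by
    apply mul_left_cancel₀ hy12
    have key : y1 * y2 * C5 q1 q2 q3
        = A2*y1*(y2*q1) + (y2*q2)*(y1*q3) + κ*B3*y1*y3*(y1*y2) := by
      unfold C5; ring
    rw [key, h1, h2, h3, hQ]
    unfold A1 A2 B1 B3 κ w w' b1 b2 b3 c1 c2 a1' a2' b1' b2' b3' c1' c2' y1 y2 y3
    ring
  have hφ : φ6 q1 q2 q3 = w * (-(a1' * C2) + y3 * Q) := by
    unfold φ6; rw [hC5]; unfold A1; ring
  have hψ : ψ6 q1 q2 q3 = w * (-(a2' * C1) + y3 * Q) := by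
    unfold ψ6; rw [hC5]; unfold A2; ring
  refine ⟨by unfold γ4 γ1 A1 A2; ring, ?_, ?_, ?_, ?_, ?_, ⟨_, hφ⟩, ⟨_, hψ⟩, ⟨Q, hC5⟩, ?_⟩
  · unfold r1'' rt1' A1 A2; ring
  · unfold r3'' rt3' A1 A2; ring
  · unfold r1 rt1 r1'' rt1' A1 A2; ring
  · unfold r2 rt2 r1'' rt1' A1 A2; ring
  · unfold r3 rt3 r3'' rt3' A1 A2; ring
  · unfold K
    exact dvd_sub (Dvd.intro _ hψ.symm |>.mul_right qK) (Dvd.intro _ hφ.symm |>.mul_right q3)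
end
end

section
/- In the Geiser specialization a₁ = a₂ = 0, with z₁ = φ₃·((a₂'²wφ₃ + B₃r̃₁')/y₁), z₂ = ψ₃·((a₁'²wψ₃ + B₁r̃₁')/y₂), z₃ = ψ₃φ₃C̃ (the indicated divisions being exact), the identities y₃z₁ − y₁z₃ = a₂'·φ₃·K̃ and y₂z₃ − y₃z₂ = a₁'·ψ₃·K̃ hold. -/
open MvPolynomial

noncomputable section

lemma key1 {R : Type*} [CommRing R] (y1 y2 y3 a2 φ ψ ct u qk1 qk2 P Q Cc U K1 K2 : R)
    (hP : y1*y2*φ = P) (hQ : y1*y2*ψ = Q) (hC : y1*y2*ct = Cc)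
    (hU : y1^2*y2*u = U) (hK1 : y2*qk1 = K1) (hK2 : y1*qk2 = K2)
    (hI : y2*y3*U - y1*Q*Cc = a2*y1*Q*K1 - a2*y2*P*K2) :
    (y1*y2)^3 * (y3*(φ*u) - y1*(ψ*φ*ct)) = (y1*y2)^3 * (a2*φ*(ψ*qk1 - φ*qk2)) := by
  subst hP hQ hC hU hK1 hK2
  linear_combination (y1*y2*φ) * hI

lemma key2 {R : Type*} [CommRing R] (y1 y2 y3 a1 φ ψ ct u qk1 qk2 P Q Cc U K1 K2 : R)
    (hP : y1*y2*φ = P) (hQ : y1*y2*ψ = Q) (hC : y1*y2*ct = Cc)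
    (hU : y1*y2^2*u = U) (hK1 : y2*qk1 = K1) (hK2 : y1*qk2 = K2)
    (hI : y2*P*Cc - y1*y3*U = a1*y1*Q*K1 - a1*y2*P*K2) :
    (y1*y2)^3 * (y2*(ψ*φ*ct) - y3*(ψ*u)) = (y1*y2)^3 * (a1*ψ*(ψ*qk1 - φ*qk2)) := by
  subst hP hQ hC hU hK1 hK2
  linear_combination (y1*y2*ψ) * hI

set_option maxHeartbeats 4000000 in
lemma hI1lem : y2*y3*(a2'^2*w*(-(a1'*C2)*y1*y2 + y3*(-(a2'*y1*(B1 - a1'*b1*y1*y3^2)) + a1'*(a2'*y3*(w - b1*y1^2*y3) - B3*y2))) + y1*y2*(B3*rt1'))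
      - y1*(-(a2'*C1)*y1*y2 + y3*(-(a2'*y1*(B1 - a1'*b1*y1*y3^2)) + a1'*(a2'*y3*(w - b1*y1^2*y3) - B3*y2)))*(-(a2'*y1*(B1 - a1'*b1*y1*y3^2)) + a1'*(a2'*y3*(w - b1*y1^2*y3) - B3*y2))
      = a2'*y1*(-(a2'*C1)*y1*y2 + y3*(-(a2'*y1*(B1 - a1'*b1*y1*y3^2)) + a1'*(a2'*y3*(w - b1*y1^2*y3) - B3*y2)))*(-(a1'*w*y3) + B1*y1)
      - a2'*y2*(-(a1'*C2)*y1*y2 + y3*(-(a2'*y1*(B1 - a1'*b1*y1*y3^2)) + a1'*(a2'*y3*(w - b1*y1^2*y3) - B3*y2)))*(-(a2'*w*y3) + B3*y2) := by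
  simp only [rt1', B1, B2, B3, C1, C2, w, w']
  ring

set_option maxHeartbeats 4000000 in
lemma hI2lem : y2*(-(a1'*C2)*y1*y2 + y3*(-(a2'*y1*(B1 - a1'*b1*y1*y3^2)) + a1'*(a2'*y3*(w - b1*y1^2*y3) - B3*y2)))*(-(a2'*y1*(B1 - a1'*b1*y1*y3^2)) + a1'*(a2'*y3*(w - b1*y1^2*y3) - B3*y2))
      - y1*y3*(a1'^2*w*(-(a2'*C1)*y1*y2 + y3*(-(a2'*y1*(B1 - a1'*b1*y1*y3^2)) + a1'*(a2'*y3*(w - b1*y1^2*y3) - B3*y2))) + y1*y2*(B1*rt1'))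
      = a1'*y1*(-(a2'*C1)*y1*y2 + y3*(-(a2'*y1*(B1 - a1'*b1*y1*y3^2)) + a1'*(a2'*y3*(w - b1*y1^2*y3) - B3*y2)))*(-(a1'*w*y3) + B1*y1)
      - a1'*y2*(-(a1'*C2)*y1*y2 + y3*(-(a2'*y1*(B1 - a1'*b1*y1*y3^2)) + a1'*(a2'*y3*(w - b1*y1^2*y3) - B3*y2)))*(-(a2'*w*y3) + B3*y2) := by
  simp only [rt1', B1, B2, B3, C1, C2, w, w']
  ring

/-- With z the Geiser involution and K̃ the fixed-point polynomial,
y₃z₁ − y₁z₃ = a₂'φ₃K̃ and y₂z₃ − y₃z₂ = a₁'ψ₃K̃. -/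
theorem stmt15 (qq1 qq2 u1 u2 qk1 qk2 z1 z2 z3 Kt : RG)
    (h1 : y2 * qq1 = B1 - a1'*b1*y1*y3^2)
    (h2 : y1 * y2 * qq2 = a2'*y3*(w - b1*y1^2*y3) - B3*y2)
    (hu1 : y1 * u1 = a2'^2*w*φ3 qq1 qq2 + B3*rt1')
    (hu2 : y2 * u2 = a1'^2*w*ψ3 qq1 qq2 + B1*rt1')
    (hk1 : y2 * qk1 = -(a1'*w*y3) + B1*y1)
    (hk2 : y1 * qk2 = -(a2'*w*y3) + B3*y2)
    (hz1 : z1 = φ3 qq1 qq2 * u1)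
    (hz2 : z2 = ψ3 qq1 qq2 * u2)
    (hz3 : z3 = ψ3 qq1 qq2 * φ3 qq1 qq2 * Ct qq1 qq2)
    (hK : Kt = ψ3 qq1 qq2 * qk1 - φ3 qq1 qq2 * qk2) :
    y3*z1 - y1*z3 = a2' * φ3 qq1 qq2 * Kt ∧
    y2*z3 - y3*z2 = a1' * ψ3 qq1 qq2 * Kt := by
  have hC : y1*y2*Ct qq1 qq2 =
      -(a2'*y1*(B1 - a1'*b1*y1*y3^2)) + a1'*(a2'*y3*(w - b1*y1^2*y3) - B3*y2) := by
    unfold Ct; linear_combination (-(a2'*y1))*h1 + a1'*h2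
  have hP : y1*y2*φ3 qq1 qq2 =
      -(a1'*C2)*y1*y2 + y3*(-(a2'*y1*(B1 - a1'*b1*y1*y3^2)) + a1'*(a2'*y3*(w - b1*y1^2*y3) - B3*y2)) := by
    unfold φ3; linear_combination y3*hC
  have hQ : y1*y2*ψ3 qq1 qq2 =
      -(a2'*C1)*y1*y2 + y3*(-(a2'*y1*(B1 - a1'*b1*y1*y3^2)) + a1'*(a2'*y3*(w - b1*y1^2*y3) - B3*y2)) := by
    unfold ψ3; linear_combination y3*hC
  have hU1 : y1^2*y2*u1 =
      a2'^2*w*(-(a1'*C2)*y1*y2 + y3*(-(a2'*y1*(B1 - a1'*b1*y1*y3^2)) + a1'*(a2'*y3*(w - b1*y1^2*y3) - B3*y2)))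
        + y1*y2*(B3*rt1') := by
    linear_combination y1*y2*hu1 + a2'^2*w*hP
  have hU2 : y1*y2^2*u2 =
      a1'^2*w*(-(a2'*C1)*y1*y2 + y3*(-(a2'*y1*(B1 - a1'*b1*y1*y3^2)) + a1'*(a2'*y3*(w - b1*y1^2*y3) - B3*y2)))
        + y1*y2*(B1*rt1') := by
    linear_combination y1*y2*hu2 + a1'^2*w*hQ
  have hne : ((y1*y2)^3 : RG) ≠ 0 := by
    unfold y1 y2
    exact pow_ne_zero _ (mul_ne_zero (X_ne_zero _) (X_ne_zero _))
  have hI1 := hI1lem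
  have hI2 := hI2lem
  constructor
  · have h := key1 y1 y2 y3 a2' (φ3 qq1 qq2) (ψ3 qq1 qq2) (Ct qq1 qq2) u1 qk1 qk2
      _ _ _ _ _ _ hP hQ hC hU1 hk1 hk2 hI1
    have h' := mul_left_cancel₀ hne h
    rw [hz1, hz3, hK]; linear_combination h'
  · have h := key2 y1 y2 y3 a1' (φ3 qq1 qq2) (ψ3 qq1 qq2) (Ct qq1 qq2) u2 qk1 qk2
      _ _ _ _ _ _ hP hQ hC hU2 hk1 hk2 hI2
    have h' := mul_left_cancel₀ hne h
    rw [hz2, hz3, hK]; linear_combination h'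
end
end
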